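/- Let z ∈ ℝ^d with ‖z‖₂ = 1 and g(x) = (1/2)‖zzᵀ − xxᵀ‖_F². If x satisfies ∇g(x) = 0 and ∇²g(x) ⪰ 0, then x = z or x = −z; hence all second-order stationary points of g are global minima. -/

import Mathlib

open Matrix Finset

/-- For z with ‖z‖₂ = 1 and g(x) = (1/2)‖zzᵀ − xxᵀ‖_F², if
∇g(x) = ‖x‖₂² x − ⟨z,x⟩ z = 0 and ∇²g(x) = 2xxᵀ − zzᵀ + ‖x‖₂² I ⪰ 0, then x = z or
x = −z; hence x is a global minimum of g. -/
theorem stmt13 {d : ℕ} (z : Fin d → ℝ) (hz : ∑ i, z i ^ 2 = 1)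
    (x : Fin d → ℝ)
    (hstat : (∑ i, x i ^ 2) • x - (∑ i, z i * x i) • z = 0)
    (hHess : ((2 : ℝ) • vecMulVec x x - vecMulVec z z
        + (∑ i, x i ^ 2) • (1 : Matrix (Fin d) (Fin d) ℝ)).PosSemidef) :
    (x = z ∨ x = -z) ∧
      ∀ y : Fin d → ℝ,
        (1 / 2 : ℝ) * ∑ i, ∑ j, (z i * z j - x i * x j) ^ 2 ≤
          (1 / 2 : ℝ) * ∑ i, ∑ j, (z i * z j - y i * y j) ^ 2 := by
  set s : ℝ := ∑ i, x i ^ 2 with hs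
  set c : ℝ := ∑ i, z i * x i with hc
  have h1 : ∀ i, s * x i = c * z i := by
    intro i
    have := congrFun hstat i
    simp only [Pi.sub_apply, Pi.smul_apply, smul_eq_mul, Pi.zero_apply] at this
    linarith
  have hsc : s * c = c := by
    calc s * c = ∑ i, (s * x i) * z i := by rw [hc, Finset.mul_sum]; apply Finset.sum_congr rfl; intros; ring
    _ = ∑ i, (c * z i) * z i := by apply Finset.sum_congr rfl; intro i _; rw [h1]
    _ = c * ∑ i, z i ^ 2 := by rw [Finset.mul_sum]; apply Finset.sum_congr rfl; intros; ring
    _ = c := by rw [hz, mul_one]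
  have hss : s * s = c * c := by
    calc s * s = ∑ i, (s * x i) * x i := by rw [hs, Finset.mul_sum]; apply Finset.sum_congr rfl; intros; ring
    _ = ∑ i, (c * z i) * x i := by apply Finset.sum_congr rfl; intro i _; rw [h1]
    _ = c * c := by rw [hc, Finset.mul_sum]; apply Finset.sum_congr rfl; intros; ring
  -- quadratic form of Hessian at z equals 2*c^2 - 1 + s
  have hform := hHess.dotProduct_mulVec_nonneg z
  have hform' : (0:ℝ) ≤ 2 * c ^ 2 - 1 + s := by
    have hq : star z ⬝ᵥ ((2 : ℝ) • vecMulVec x x - vecMulVec z z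
        + s • (1 : Matrix (Fin d) (Fin d) ℝ)) *ᵥ z = 2 * c ^ 2 - 1 + s := by
      simp only [star_trivial, dotProduct, mulVec, Matrix.add_apply, Matrix.sub_apply,
        Matrix.smul_apply, vecMulVec_apply, Matrix.one_apply, smul_eq_mul]
      have expand : ∀ i, (∑ j, (2 * (x i * x j) - z i * z j + s * (if i = j then (1:ℝ) else 0)) * z j)
          = 2 * x i * (∑ j, x j * z j) - z i * (∑ j, z j * z j) + s * z i := by
        intro i
        have step : ∀ j, (2 * (x i * x j) - z i * z j + s * (if i = j then (1:ℝ) else 0)) * z j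
            = 2 * x i * (x j * z j) - z i * (z j * z j) + s * ((if i = j then (1:ℝ) else 0) * z j) := by
          intro j; ring
        rw [Finset.sum_congr rfl fun j _ => step j, Finset.sum_add_distrib,
          Finset.sum_sub_distrib, ← Finset.mul_sum, ← Finset.mul_sum, ← Finset.mul_sum]
        congr 1
        simp
      have expand2 : ∑ i, z i * (2 * x i * (∑ j, x j * z j) - z i * (∑ j, z j * z j) + s * z i)
          = 2 * c ^ 2 - 1 + s := by
        have hxz : ∑ j, x j * z j = c := by rw [hc]; apply Finset.sum_congr rfl; intros; ring
        have hzz : ∑ j, z j * z j = 1 := by rw [← hz]; apply Finset.sum_congr rfl; intros; ring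
        rw [hxz, hzz]
        have step : ∀ i, z i * (2 * x i * c - z i * 1 + s * z i)
            = z i * (2 * x i * c) - z i * (z i * 1) + z i * (s * z i) := by intro i; ring
        rw [Finset.sum_congr rfl fun i _ => step i, Finset.sum_add_distrib, Finset.sum_sub_distrib]
        have e1 : ∑ i, z i * (2 * x i * c) = 2 * c ^ 2 := by
          rw [show (2:ℝ) * c ^ 2 = 2 * c * c by ring, ← hxz, Finset.mul_sum]
          apply Finset.sum_congr rfl; intros; ring
        have e2 : ∑ i, z i * (z i * 1) = 1 := by
          have h' : ∑ i, z i * (z i * 1) = ∑ i, z i ^ 2 := by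
            apply Finset.sum_congr rfl; intros; ring
          rw [h', hz]
        have e3 : ∑ i, z i * (s * z i) = s := by
          have h' : ∑ i, z i * (s * z i) = s * ∑ i, z i ^ 2 := by
            rw [Finset.mul_sum]; apply Finset.sum_congr rfl; intros; ring
          rw [h', hz, mul_one]
        rw [e1, e2, e3]
      calc ∑ i, z i * ∑ j, (2 * (x i * x j) - z i * z j + s * (if i = j then (1:ℝ) else 0)) * z j
          = ∑ i, z i * (2 * x i * (∑ j, x j * z j) - z i * (∑ j, z j * z j) + s * z i) := by
            apply Finset.sum_congr rfl; intro i _; rw [expand]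
        _ = 2 * c ^ 2 - 1 + s := expand2
    rw [hq] at hform
    exact hform
  have hmain : x = z ∨ x = -z := by
    by_cases hc0 : c = 0
    · exfalso
      have hs0 : s = 0 := by
        have : s * s = 0 := by rw [hss, hc0]; ring
        exact pow_eq_zero_iff (n := 2) two_ne_zero |>.mp (by rw [sq]; exact this)
      rw [hc0, hs0] at hform'
      norm_num at hform'
    · have hs1 : s = 1 := by
        have := hsc
        field_simp at this
        rcases mul_eq_mul_right_iff.mp (by linarith [hsc] : s * c = 1 * c) with h | h
        · exact h
        · exact absurd h hc0
      have hc1 : c = 1 ∨ c = -1 := by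
        have h2 : c * c = 1 := by rw [← hss, hs1]; ring
        exact mul_self_eq_one_iff.mp h2
      have hx : ∀ i, x i = c * z i := by
        intro i; have := h1 i; rw [hs1] at this; linarith
      rcases hc1 with h | h
      · left; funext i; rw [hx i, h, one_mul]
      · right; funext i; rw [hx i, h]; simp
  refine ⟨hmain, ?_⟩
  intro y
  have hLHS : (1 / 2 : ℝ) * ∑ i, ∑ j, (z i * z j - x i * x j) ^ 2 = 0 := by
    rcases hmain with h | h <;> subst h <;> simp [neg_mul, mul_neg]
  rw [hLHS]
  positivity
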